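/- Let N be an integer with N ≥ 2. For each integer a with 1 ≤ a ≤ N − 1, let v_a : ZMod (2N) → ℂ be the vector v_a = (e_a − e_{2N−a})/√2, where e_x is the standard basis vector supported at x. Let H be the Hartley matrix of size 2N. Then for every a with 1 ≤ a ≤ N − 1, H.mulVec v_a = Σ_{y=1}^{N−1} (√(2/N)·sin(π·a·y/N)) • v_y; that is, H preserves the span of {v_1, …, v_{N−1}} and acts on it as the type-I discrete sine transform S^I_{N−1} with entries √(2/N)·sin(π·m·n/N). -/

import Mathlib

/-- The `cas` function: `cas x = cos x + sin x`. -/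
noncomputable def cas (x : ℝ) : ℝ := Real.cos x + Real.sin x

/-- The Hartley matrix of size `M`, indexed by `ZMod M`. -/
noncomputable def hartleyMatrix (M : ℕ) : Matrix (ZMod M) (ZMod M) ℂ :=
  fun a y => ((cas (2 * Real.pi * a.val * y.val / M) / Real.sqrt M : ℝ) : ℂ)

lemma cas_add_int_mul_two_pi (x : ℝ) (n : ℤ) : cas (x + n * (2 * Real.pi)) = cas x := by
  unfold cas
  rw [Real.cos_add_int_mul_two_pi, Real.sin_add_int_mul_two_pi]

lemma cas_sub_cas_neg (x : ℝ) : cas x - cas (-x) = 2 * Real.sin x := by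
  unfold cas
  rw [Real.cos_neg, Real.sin_neg]; ring


/-- The Hartley matrix of size `2N` maps each vector `v_a = (e_a - e_{2N-a})/√2`,
`1 ≤ a ≤ N-1`, to the combination `∑_{y=1}^{N-1} √(2/N) sin(π a y / N) • v_y`; i.e.
it acts on the span of the `v_a` as the type-I discrete sine transform. -/
theorem hartley_acts_as_sineTransform (N : ℕ) [NeZero N] (hN : 2 ≤ N)
    (v : ℕ → ZMod (2 * N) → ℂ)
    (hv : ∀ a : ℕ, v a = fun x =>
      ((if x = ((a : ℕ) : ZMod (2 * N)) then (1 : ℂ) else 0) -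
        (if x = ((2 * N - a : ℕ) : ZMod (2 * N)) then (1 : ℂ) else 0)) / Real.sqrt 2)
    (a : ℕ) (ha1 : 1 ≤ a) (ha2 : a ≤ N - 1) :
    (hartleyMatrix (2 * N)).mulVec (v a) =
      ∑ y ∈ Finset.Icc 1 (N - 1),
        ((Real.sqrt (2 / N) * Real.sin (Real.pi * a * y / N) : ℝ) : ℂ) • v y := by
  haveI : NeZero (2 * N) := ⟨by omega⟩
  have hN0 : (N : ℝ) ≠ 0 := Nat.cast_ne_zero.mpr (by omega)
  have haM : a < 2 * N := by omega
  have hbM : 2 * N - a < 2 * N := by omega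
  have hs2 : Real.sqrt 2 ≠ 0 := by positivity
  have hsN : Real.sqrt (N : ℝ) ≠ 0 := by positivity
  have h22 : Real.sqrt 2 * Real.sqrt 2 = 2 := Real.mul_self_sqrt (by norm_num)
  have hsplit : Real.sqrt ((2 * N : ℕ) : ℝ) = Real.sqrt 2 * Real.sqrt N := by
    push_cast
    exact Real.sqrt_mul (by norm_num) _
  have hsq : Real.sqrt ((2 : ℝ) / N) = Real.sqrt 2 / Real.sqrt N :=
    Real.sqrt_div (by norm_num) _
  funext x
  have hX : x.val < 2 * N := x.val_lt
  have hcond : ∀ c : ℕ, c < 2 * N → ((x = (c : ZMod (2 * N))) ↔ c = x.val) := by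
    intro c hc
    constructor
    · intro h
      simpa [ZMod.val_natCast_of_lt hc] using (congrArg ZMod.val h).symm
    · intro h
      apply ZMod.val_injective
      simpa [ZMod.val_natCast_of_lt hc] using h.symm
  have hsum : ∀ (f : ZMod (2 * N) → ℂ) (c : ZMod (2 * N)),
      (∑ y, f y * (if y = c then (1 : ℂ) else 0)) = f c := by
    intro f c; simp
  have hsum2 : ∀ (f : ℕ → ℂ) (c : ℕ),
      (∑ y ∈ Finset.Icc 1 (N - 1), f y * (if y = c then (1 : ℂ) else 0)) =
        if c ∈ Finset.Icc 1 (N - 1) then f c else 0 := by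
    intro f c
    simp [mul_ite, Finset.sum_ite_eq']
  set H := hartleyMatrix (2 * N) with hH
  set A : ZMod (2 * N) := ((a : ℕ) : ZMod (2 * N)) with hA
  set B : ZMod (2 * N) := ((2 * N - a : ℕ) : ZMod (2 * N)) with hB
  set C : ℕ → ℂ := fun y =>
    ((Real.sqrt (2 / N) * Real.sin (Real.pi * a * y / N) : ℝ) : ℂ) with hC
  have lhs_eq : (H.mulVec (v a)) x = (H x A - H x B) / (Real.sqrt 2 : ℝ) := by
    rw [Matrix.mulVec, dotProduct]
    simp only [hv]
    rw [← hsum (fun y => H x y) A, ← hsum (fun y => H x y) B, ← Finset.sum_sub_distrib,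
      Finset.sum_div]
    exact Finset.sum_congr rfl fun y _ => by ring
  rw [lhs_eq]
  have rhs_eq : (∑ y ∈ Finset.Icc 1 (N - 1), C y • v y) x =
      ((if x.val ∈ Finset.Icc 1 (N - 1) then C x.val else 0) -
        (if 2 * N - x.val ∈ Finset.Icc 1 (N - 1) then C (2 * N - x.val) else 0)) /
        (Real.sqrt 2 : ℝ) := by
    rw [Finset.sum_apply]
    simp only [hv, Pi.smul_apply, smul_eq_mul]
    rw [← hsum2 C x.val, ← hsum2 C (2 * N - x.val), ← Finset.sum_sub_distrib,
      Finset.sum_div]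
    refine Finset.sum_congr rfl fun y hy => ?_
    have hy' := Finset.mem_Icc.mp hy
    rw [if_congr (hcond y (by omega)) rfl rfl,
      if_congr ((hcond (2 * N - y) (by omega)).trans
        (by omega : 2 * N - y = x.val ↔ y = 2 * N - x.val)) rfl rfl,
      if_congr (show y = x.val ↔ y = x.val from Iff.rfl) rfl rfl]
    ring
  rw [rhs_eq]
  -- Both sides are now explicit; prove they agree by computing each to sin(π a X / N)/√N.
  have hvalA : A.val = a := ZMod.val_natCast_of_lt haM
  have hvalB : B.val = 2 * N - a := ZMod.val_natCast_of_lt hbM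
  set X := x.val with hXdef
  have lhs_val : (H x A - H x B) / (Real.sqrt 2 : ℝ) =
      ((Real.sin (Real.pi * a * X / N) / Real.sqrt N : ℝ) : ℂ) := by
    simp only [hH, hartleyMatrix, hvalA, hvalB]
    rw [← Complex.ofReal_sub, ← Complex.ofReal_div, Complex.ofReal_inj]
    have e1 : 2 * Real.pi * X * a / ((2 * N : ℕ) : ℝ) = Real.pi * a * X / N := by
      push_cast; field_simp
    have e2 : 2 * Real.pi * X * ((2 * N - a : ℕ) : ℝ) / ((2 * N : ℕ) : ℝ)
        = -(Real.pi * a * X / N) + ((X : ℤ) : ℝ) * (2 * Real.pi) := by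
      push_cast [Nat.cast_sub haM.le]; field_simp; ring
    rw [e1, e2, cas_add_int_mul_two_pi, div_sub_div_same, cas_sub_cas_neg, hsplit]
    field_simp
    linear_combination (-(Real.sin (Real.pi * a * X / N))) * h22
  rw [lhs_val]
  by_cases h1 : 1 ≤ X ∧ X ≤ N - 1
  · rw [if_pos (Finset.mem_Icc.mpr h1), if_neg (by rw [Finset.mem_Icc]; omega), sub_zero, hC]
    rw [← Complex.ofReal_div, Complex.ofReal_inj]
    rw [hsq]
    field_simp
  · by_cases h2 : X = 0 ∨ X = N
    · rw [if_neg (by rw [Finset.mem_Icc]; omega), if_neg (by rw [Finset.mem_Icc]; omega)]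
      have hz : Real.sin (Real.pi * a * X / N) = 0 := by
        rcases h2 with h | h
        · rw [h]; push_cast; simp
        · have : Real.pi * a * (X : ℝ) / N = a * Real.pi := by
            rw [h]; field_simp
          rw [this, Real.sin_nat_mul_pi]
      rw [hz]
      simp
    · have h3 : N + 1 ≤ X ∧ X ≤ 2 * N - 1 := by omega
      rw [if_neg (by rw [Finset.mem_Icc]; omega), if_pos (Finset.mem_Icc.mpr (by omega)),
        zero_sub, hC]
      rw [← Complex.ofReal_neg, ← Complex.ofReal_div, Complex.ofReal_inj]
      have e3 : Real.pi * a * ((2 * N - X : ℕ) : ℝ) / N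
          = -(Real.pi * a * X / N) + ((a : ℤ) : ℝ) * (2 * Real.pi) := by
        push_cast [Nat.cast_sub (by omega : X ≤ 2 * N)]; field_simp; ring
      rw [e3, Real.sin_add_int_mul_two_pi, Real.sin_neg, hsq]
      field_simp
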